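/- Let L be a distributive lattice, and consider the four-term chain complex C(L) with differential ∂ = a∂^◁ + b∂^∨ + c∂^∧ + d∂^▷ on ℤL^{n+1}. If L has a bottom ⊥ and top ⊤ and t ∈ L, then the reduced homology Hₙ(L, t) is annihilated by gcd(a+b, a+c) for all n. -/

import Mathlib

/-- The `i`-th face map on tuples, for a binary operation `⋆`. -/
def dFun {X : Type*} (op : X → X → X) (n : ℕ) (i : Fin (n+1)) (x : Fin (n+1) → X) :
    Fin n → X :=
  fun j => if (j : ℕ) < (i : ℕ) then op (x j.castSucc) (x i) else x j.succ

/-- The chain group `Cₙ = ℤ L^{n+1}`. -/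
abbrev CC (X : Type*) (n : ℕ) := (Fin (n+1) → X) →₀ ℤ

/-- The four-term boundary `∂ = a∂^◁ + b∂^∨ + c∂^∧ + d∂^▷ : Cₙ₊₁ → Cₙ`
of a lattice. -/
noncomputable def bdLat {L : Type*} [Lattice L] (a b c d : ℤ) (n : ℕ) :
    CC L (n+1) →ₗ[ℤ] CC L n :=
  ∑ i : Fin (n+2),
    ((((-1 : ℤ) ^ (i : ℕ)) * a) • Finsupp.lmapDomain ℤ ℤ (dFun (fun x _ => x) (n+1) i) +
     (((-1 : ℤ) ^ (i : ℕ)) * b) • Finsupp.lmapDomain ℤ ℤ (dFun (· ⊔ ·) (n+1) i) +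
     (((-1 : ℤ) ^ (i : ℕ)) * c) • Finsupp.lmapDomain ℤ ℤ (dFun (· ⊓ ·) (n+1) i) +
     (((-1 : ℤ) ^ (i : ℕ)) * d) • Finsupp.lmapDomain ℤ ℤ (dFun (fun _ y => y) (n+1) i))

/-- The subcomplex `C({t})` spanned by the constant tuples at `t`. -/
noncomputable def Tsub {L : Type*} (t : L) (n : ℕ) : Submodule ℤ (CC L n) :=
  Submodule.span ℤ {Finsupp.single (fun _ : Fin (n+1) => t) (1 : ℤ)}

/-- The relative cycles of the reduced complex `C(L,t) = C(L)/C({t})`: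
in degree `n+1` the chains whose boundary lies in `C({t})`, in degree `0` everything. -/
noncomputable def Zrel {L : Type*} [Lattice L] (a b c d : ℤ) (t : L) :
    (n : ℕ) → Submodule ℤ (CC L n)
  | 0 => ⊤
  | n+1 => Submodule.comap (bdLat a b c d n) (Tsub t n)

/-- The `n`-th reduced homology `Hₙ(L,t)`, i.e. the `n`-th homology of the
quotient complex `C(L)/C({t})`: relative cycles modulo `C({t}) + im ∂`. -/
noncomputable abbrev Hrel {L : Type*} [Lattice L] (a b c d : ℤ) (t : L) (n : ℕ) :=
  Zrel a b c d t n ⧸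
    Submodule.comap (Zrel a b c d t n).subtype
      (Tsub t n ⊔ LinearMap.range (bdLat a b c d n))


set_option linter.unusedSectionVars false
namespace Ann

variable {L : Type*} [Lattice L]

lemma dFun_snoc_castSucc (op : L → L → L) (n : ℕ) (i : Fin (n+1)) (y : Fin (n+1) → L) (z : L) :
    dFun op (n+1) i.castSucc (Fin.snoc y z) = Fin.snoc (dFun op n i y) z := by
  funext j
  refine Fin.lastCases ?_ ?_ j
  · simp only [dFun, Fin.coe_castSucc, Fin.val_last]
    rw [if_neg (by omega : ¬ n < (i:ℕ))]
    simp [Fin.succ_last]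
  · intro j'
    by_cases hj : (j' : ℕ) < (i : ℕ)
    · simp [dFun, hj, Fin.snoc_castSucc]
    · simp [dFun, hj, -Fin.castSucc_succ, Fin.succ_castSucc]

lemma dFun_snoc_last (op : L → L → L) (n : ℕ) (y : Fin (n+1) → L) (z : L) :
    dFun op (n+1) (Fin.last (n+1)) (Fin.snoc y z) = fun j => op (y j) z := by
  funext j
  have hj : (j : ℕ) < n+1 := j.isLt
  simp [dFun, hj]

lemma dFun_const (op : L → L → L) (t : L) (hop : op t t = t) (n : ℕ) (i : Fin (n+1)) :
    dFun op n i (fun _ => t) = fun _ => t := by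
  funext j
  simp [dFun, hop]

noncomputable def Bsing (a b c d : ℤ) (n : ℕ) (y : Fin (n+2) → L) : CC L n :=
  ∑ i : Fin (n+2),
    ((((-1 : ℤ) ^ (i : ℕ)) * a) • Finsupp.single (dFun (fun x _ => x) (n+1) i y) (1:ℤ) +
     (((-1 : ℤ) ^ (i : ℕ)) * b) • Finsupp.single (dFun (· ⊔ ·) (n+1) i y) (1:ℤ) +
     (((-1 : ℤ) ^ (i : ℕ)) * c) • Finsupp.single (dFun (· ⊓ ·) (n+1) i y) (1:ℤ) +
     (((-1 : ℤ) ^ (i : ℕ)) * d) • Finsupp.single (dFun (fun _ y => y) (n+1) i y) (1:ℤ))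

lemma bdLat_single (a b c d : ℤ) (n : ℕ) (y : Fin (n+2) → L) :
    bdLat a b c d n (Finsupp.single y 1) = Bsing a b c d n y := by
  simp [bdLat, Bsing, Finsupp.lmapDomain_apply, Finsupp.mapDomain_single]

open Finsupp

noncomputable def hSnoc (z : L) (n : ℕ) : CC L n →ₗ[ℤ] CC L (n+1) :=
  ((-1 : ℤ)^(n+1)) • Finsupp.lmapDomain ℤ ℤ (fun y : Fin (n+1) → L => Fin.snoc y z)

noncomputable def Emap {L : Type*} (t : L) (n : ℕ) : CC L n →ₗ[ℤ] CC L n :=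
  Finsupp.lmapDomain ℤ ℤ (fun _ => fun _ => t)

set_option maxHeartbeats 1000000 in
lemma raw_homotopy (a b c d : ℤ) (z : L) (n : ℕ) :
    bdLat a b c d (n+1) ∘ₗ hSnoc z (n+1) + hSnoc z n ∘ₗ bdLat a b c d n =
      a • LinearMap.id
      + b • Finsupp.lmapDomain ℤ ℤ (fun y : Fin (n+2) → L => fun j => y j ⊔ z)
      + c • Finsupp.lmapDomain ℤ ℤ (fun y : Fin (n+2) → L => fun j => y j ⊓ z)
      + d • Emap z (n+1) := by
  have key : ∀ y : Fin (n+2) → L,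
      (bdLat a b c d (n+1) ∘ₗ hSnoc z (n+1) + hSnoc z n ∘ₗ bdLat a b c d n)
        (Finsupp.single y 1) =
      ((a • LinearMap.id
      + b • Finsupp.lmapDomain ℤ ℤ (fun y : Fin (n+2) → L => fun j => y j ⊔ z)
      + c • Finsupp.lmapDomain ℤ ℤ (fun y : Fin (n+2) → L => fun j => y j ⊓ z)
      + d • Emap z (n+1) : CC L (n+1) →ₗ[ℤ] CC L (n+1))) (Finsupp.single y 1) := by
    intro y
    have h1 : bdLat a b c d (n+1) (hSnoc z (n+1) (Finsupp.single y 1)) =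
        ((-1:ℤ)^(n+1+1)) •
        ((∑ i : Fin (n+2),
          ((((-1 : ℤ) ^ (i : ℕ)) * a) • Finsupp.single (Fin.snoc (dFun (fun x _ => x) (n+1) i y) z) (1:ℤ) +
           (((-1 : ℤ) ^ (i : ℕ)) * b) • Finsupp.single (Fin.snoc (dFun (· ⊔ ·) (n+1) i y) z) (1:ℤ) +
           (((-1 : ℤ) ^ (i : ℕ)) * c) • Finsupp.single (Fin.snoc (dFun (· ⊓ ·) (n+1) i y) z) (1:ℤ) +
           (((-1 : ℤ) ^ (i : ℕ)) * d) • Finsupp.single (Fin.snoc (dFun (fun _ w => w) (n+1) i y) z) (1:ℤ)))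
         + ((((-1 : ℤ) ^ (n+1+1)) * a) • Finsupp.single y (1:ℤ) +
            (((-1 : ℤ) ^ (n+1+1)) * b) • Finsupp.single (fun j => y j ⊔ z) (1:ℤ) +
            (((-1 : ℤ) ^ (n+1+1)) * c) • Finsupp.single (fun j => y j ⊓ z) (1:ℤ) +
            (((-1 : ℤ) ^ (n+1+1)) * d) • Finsupp.single (fun _ : Fin (n+2) => z) (1:ℤ))) := by
      have e1 : hSnoc z (n+1) (Finsupp.single y 1)
          = ((-1:ℤ)^(n+1+1)) • Finsupp.single (Fin.snoc y z) 1 := by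
        simp [hSnoc, Finsupp.lmapDomain_apply, Finsupp.mapDomain_single]
      rw [e1, map_smul, bdLat_single, Bsing, Fin.sum_univ_castSucc]
      congr 1
      congr 1
      · refine Finset.sum_congr rfl fun i _ => ?_
        simp only [dFun_snoc_castSucc, Fin.coe_castSucc]
      · simp only [dFun_snoc_last, Fin.val_last]
    have h2 : hSnoc z n (bdLat a b c d n (Finsupp.single y 1)) =
        ((-1:ℤ)^(n+1)) •
        (∑ i : Fin (n+2),
          ((((-1 : ℤ) ^ (i : ℕ)) * a) • Finsupp.single (Fin.snoc (dFun (fun x _ => x) (n+1) i y) z) (1:ℤ) +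
           (((-1 : ℤ) ^ (i : ℕ)) * b) • Finsupp.single (Fin.snoc (dFun (· ⊔ ·) (n+1) i y) z) (1:ℤ) +
           (((-1 : ℤ) ^ (i : ℕ)) * c) • Finsupp.single (Fin.snoc (dFun (· ⊓ ·) (n+1) i y) z) (1:ℤ) +
           (((-1 : ℤ) ^ (i : ℕ)) * d) • Finsupp.single (Fin.snoc (dFun (fun _ w => w) (n+1) i y) z) (1:ℤ))) := by
      rw [bdLat_single, Bsing, map_sum, Finset.smul_sum]
      refine Finset.sum_congr rfl fun i _ => ?_
      simp only [map_add, map_smul, hSnoc, LinearMap.smul_apply,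
        Finsupp.lmapDomain_apply, Finsupp.mapDomain_single]
      module
    simp only [LinearMap.add_apply, LinearMap.comp_apply]
    rw [h1, h2]
    simp only [LinearMap.add_apply, LinearMap.smul_apply, LinearMap.id_apply,
      Finsupp.lmapDomain_apply, Finsupp.mapDomain_single, Emap]
    rcases Nat.even_or_odd (n+1) with he | ho
    · have e1 : (-1:ℤ)^(n+1) = 1 := Even.neg_one_pow he
      have e2 : (-1:ℤ)^(n+1+1) = -1 := by rw [pow_succ, e1]; ring
      rw [e1, e2]
      module
    · have e1 : (-1:ℤ)^(n+1) = -1 := Odd.neg_one_pow ho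
      have e2 : (-1:ℤ)^(n+1+1) = 1 := by rw [pow_succ, e1]; ring
      rw [e1, e2]
      module
  apply Finsupp.lhom_ext
  intro y r
  have : (Finsupp.single y r : CC L (n+1)) = r • Finsupp.single y 1 := by
    rw [Finsupp.smul_single, smul_eq_mul, mul_one]
  rw [this, map_smul, map_smul, key]


lemma snoc_fin_zero (g : Fin 0 → L) (z : L) : Fin.snoc g z = fun _ : Fin 1 => z := by
  funext j
  have hj : j = Fin.last 0 := Fin.ext (by omega)
  rw [hj, Fin.snoc_last]

set_option maxHeartbeats 1000000 in
lemma raw_homotopy0 (a b c d : ℤ) (z : L) :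
    bdLat a b c d 0 ∘ₗ hSnoc z 0 =
      (a • LinearMap.id
      + b • Finsupp.lmapDomain ℤ ℤ (fun y : Fin 1 → L => fun j => y j ⊔ z)
      + c • Finsupp.lmapDomain ℤ ℤ (fun y : Fin 1 → L => fun j => y j ⊓ z)
      + (-(a+b+c)) • Emap z 0 : CC L 0 →ₗ[ℤ] CC L 0) := by
  have key : ∀ y : Fin 1 → L,
      bdLat a b c d 0 (hSnoc z 0 (Finsupp.single y 1)) =
      ((a • LinearMap.id
      + b • Finsupp.lmapDomain ℤ ℤ (fun y : Fin 1 → L => fun j => y j ⊔ z)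
      + c • Finsupp.lmapDomain ℤ ℤ (fun y : Fin 1 → L => fun j => y j ⊓ z)
      + (-(a+b+c)) • Emap z 0 : CC L 0 →ₗ[ℤ] CC L 0)) (Finsupp.single y 1) := by
    intro y
    have e1 : hSnoc z 0 (Finsupp.single y 1)
        = ((-1:ℤ)^(0+1)) • Finsupp.single (Fin.snoc y z) 1 := by
      simp [hSnoc, Finsupp.lmapDomain_apply, Finsupp.mapDomain_single]
    rw [e1, map_smul, bdLat_single, Bsing, Fin.sum_univ_castSucc, Fin.sum_univ_one]
    simp only [dFun_snoc_castSucc, dFun_snoc_last, snoc_fin_zero, Fin.coe_castSucc,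
      Fin.val_zero, Fin.val_last, pow_zero, pow_one,
      LinearMap.add_apply, LinearMap.smul_apply, LinearMap.id_apply,
      Finsupp.lmapDomain_apply, Finsupp.mapDomain_single, Emap]
    module
  apply Finsupp.lhom_ext
  intro y r
  have hr : (Finsupp.single y r : CC L 0) = r • Finsupp.single y 1 := by
    rw [Finsupp.smul_single, smul_eq_mul, mul_one]
  rw [hr, map_smul, map_smul, LinearMap.comp_apply, key]


lemma lmap_sup_bot [OrderBot L] (n : ℕ) :
    Finsupp.lmapDomain ℤ ℤ (fun y : Fin (n+1) → L => fun j => y j ⊔ ⊥)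
      = (LinearMap.id : CC L n →ₗ[ℤ] CC L n) := by
  rw [show (fun y : Fin (n+1) → L => fun j => y j ⊔ ⊥) = id from by funext y j; simp]
  exact Finsupp.lmapDomain_id ℤ ℤ

lemma lmap_inf_bot [OrderBot L] (n : ℕ) :
    Finsupp.lmapDomain ℤ ℤ (fun y : Fin (n+1) → L => fun j => y j ⊓ ⊥)
      = Emap (⊥ : L) n := by
  rw [show (fun y : Fin (n+1) → L => fun j => y j ⊓ ⊥) = (fun _ => fun _ => (⊥:L)) from by
    funext y j; simp]
  rfl

lemma lmap_inf_top [OrderTop L] (n : ℕ) :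
    Finsupp.lmapDomain ℤ ℤ (fun y : Fin (n+1) → L => fun j => y j ⊓ ⊤)
      = (LinearMap.id : CC L n →ₗ[ℤ] CC L n) := by
  rw [show (fun y : Fin (n+1) → L => fun j => y j ⊓ ⊤) = id from by funext y j; simp]
  exact Finsupp.lmapDomain_id ℤ ℤ

lemma lmap_sup_top [OrderTop L] (n : ℕ) :
    Finsupp.lmapDomain ℤ ℤ (fun y : Fin (n+1) → L => fun j => y j ⊔ ⊤)
      = Emap (⊤ : L) n := by
  rw [show (fun y : Fin (n+1) → L => fun j => y j ⊔ ⊤) = (fun _ => fun _ => (⊤:L)) from by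
    funext y j; simp]
  rfl

lemma spec_bot [OrderBot L] (a b c d : ℤ) (n : ℕ) :
    bdLat a b c d (n+1) ∘ₗ hSnoc (⊥:L) (n+1) + hSnoc (⊥:L) n ∘ₗ bdLat a b c d n
      = (a+b) • LinearMap.id + (c+d) • Emap (⊥:L) (n+1) := by
  rw [raw_homotopy, lmap_sup_bot, lmap_inf_bot]
  module

lemma spec_top [OrderTop L] (a b c d : ℤ) (n : ℕ) :
    bdLat a b c d (n+1) ∘ₗ hSnoc (⊤:L) (n+1) + hSnoc (⊤:L) n ∘ₗ bdLat a b c d n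
      = (a+c) • LinearMap.id + (b+d) • Emap (⊤:L) (n+1) := by
  rw [raw_homotopy, lmap_sup_top, lmap_inf_top]
  module

lemma spec_bot0 [OrderBot L] (a b c d : ℤ) :
    bdLat a b c d 0 ∘ₗ hSnoc (⊥:L) 0
      = (a+b) • LinearMap.id + (-(a+b)) • Emap (⊥:L) 0 := by
  rw [raw_homotopy0, lmap_sup_bot, lmap_inf_bot]
  module

lemma spec_top0 [OrderTop L] (a b c d : ℤ) :
    bdLat a b c d 0 ∘ₗ hSnoc (⊤:L) 0
      = (a+c) • LinearMap.id + (-(a+c)) • Emap (⊤:L) 0 := by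
  rw [raw_homotopy0, lmap_sup_top, lmap_inf_top]
  module


lemma Emap_single_const (t : L) (n : ℕ) (r : ℤ) :
    Emap t n (Finsupp.single (fun _ : Fin (n+1) => t) r)
      = Finsupp.single (fun _ : Fin (n+1) => t) r := by
  simp [Emap, Finsupp.mapDomain_single]

lemma Emap_fix {t : L} {n : ℕ} {w : CC L n} (hw : w ∈ Tsub t n) : Emap t n w = w := by
  obtain ⟨μ, rfl⟩ := Submodule.mem_span_singleton.mp hw
  rw [map_smul, Emap_single_const]

lemma Emap_mem_Tsub (t : L) (n : ℕ) (v : CC L n) : Emap t n v ∈ Tsub t n := by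
  induction v using Finsupp.induction_linear with
  | zero => simp [Tsub]
  | add f g hf hg => rw [map_add]; exact add_mem hf hg
  | single y r =>
      have : Emap t n (Finsupp.single y r) = r • Finsupp.single (fun _ : Fin (n+1) => t) 1 := by
        simp [Emap, Finsupp.mapDomain_single, Finsupp.smul_single]
      rw [this]
      exact Submodule.smul_mem _ _ (Submodule.mem_span_singleton_self _)

lemma Emap_comp (z t : L) (n : ℕ) : Emap z n ∘ₗ Emap t n = Emap (z : L) n := by
  apply Finsupp.lhom_ext
  intro y r
  simp [Emap, Finsupp.mapDomain_single]

lemma bdLat_Emap (a b c d : ℤ) (t : L) (n : ℕ) :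
    bdLat a b c d n ∘ₗ Emap t (n+1) = Emap t n ∘ₗ bdLat a b c d n := by
  have key : ∀ y : Fin (n+2) → L,
      bdLat a b c d n (Emap t (n+1) (Finsupp.single y 1))
        = Emap t n (bdLat a b c d n (Finsupp.single y 1)) := by
    intro y
    have e1 : Emap t (n+1) (Finsupp.single y (1:ℤ))
        = Finsupp.single (fun _ : Fin (n+2) => t) 1 := by
      simp [Emap, Finsupp.mapDomain_single]
    rw [e1, bdLat_single, bdLat_single, Bsing, Bsing, map_sum]
    refine Finset.sum_congr rfl fun i _ => ?_
    rw [dFun_const (fun x _ => x) t rfl, dFun_const _ t (sup_idem t), dFun_const _ t (inf_idem t),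
      dFun_const (fun _ w => w) t rfl]
    simp only [map_add, map_smul, Emap, Finsupp.lmapDomain_apply, Finsupp.mapDomain_single]
  apply Finsupp.lhom_ext
  intro y r
  have hr : (Finsupp.single y r : CC L (n+1)) = r • Finsupp.single y 1 := by
    rw [Finsupp.smul_single, smul_eq_mul, mul_one]
  rw [hr, map_smul, map_smul, LinearMap.comp_apply, LinearMap.comp_apply, key]


lemma annih_step (a b c d e e' : ℤ) (t z : L) (n : ℕ)
    (spec : bdLat a b c d (n+1) ∘ₗ hSnoc z (n+1) + hSnoc z n ∘ₗ bdLat a b c d n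
      = e • LinearMap.id + e' • Emap z (n+1))
    (v : CC L (n+1)) (hv : bdLat a b c d n v ∈ Tsub t n) :
    e • v ∈ Tsub t (n+1) ⊔ LinearMap.range (bdLat a b c d (n+1)) := by
  set w := v - Emap t (n+1) v with hw
  have hbw : bdLat a b c d n w = 0 := by
    rw [hw, map_sub]
    have h := LinearMap.congr_fun (bdLat_Emap a b c d t n) v
    simp only [LinearMap.comp_apply] at h
    rw [h, Emap_fix hv, sub_self]
  have hEz : Emap z (n+1) w = 0 := by
    rw [hw, map_sub]
    have h := LinearMap.congr_fun (Emap_comp z t (n+1)) v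
    simp only [LinearMap.comp_apply] at h
    rw [h, sub_self]
  have hspec := LinearMap.congr_fun spec w
  simp only [LinearMap.add_apply, LinearMap.comp_apply, LinearMap.smul_apply,
    LinearMap.id_apply] at hspec
  rw [hbw, map_zero, add_zero, hEz, smul_zero, add_zero] at hspec
  have hev : e • v = e • Emap t (n+1) v + bdLat a b c d (n+1) (hSnoc z (n+1) w) := by
    rw [hspec, hw]
    module
  rw [hev]
  exact Submodule.add_mem _
    (Submodule.mem_sup_left (Submodule.smul_mem _ _ (Emap_mem_Tsub t (n+1) v)))
    (Submodule.mem_sup_right ⟨_, rfl⟩)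

lemma annih_step0 (a b c d e e' : ℤ) (t z : L)
    (spec : bdLat a b c d 0 ∘ₗ hSnoc z 0 = e • LinearMap.id + e' • Emap z 0)
    (v : CC L 0) :
    e • v ∈ Tsub t 0 ⊔ LinearMap.range (bdLat a b c d 0) := by
  set w := v - Emap t 0 v with hw
  have hEz : Emap z 0 w = 0 := by
    rw [hw, map_sub]
    have h := LinearMap.congr_fun (Emap_comp z t 0) v
    simp only [LinearMap.comp_apply] at h
    rw [h, sub_self]
  have hspec := LinearMap.congr_fun spec w
  simp only [LinearMap.add_apply, LinearMap.comp_apply, LinearMap.smul_apply,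
    LinearMap.id_apply] at hspec
  rw [hEz, smul_zero, add_zero] at hspec
  have hev : e • v = e • Emap t 0 v + bdLat a b c d 0 (hSnoc z 0 w) := by
    rw [hspec, hw]
    module
  rw [hev]
  exact Submodule.add_mem _
    (Submodule.mem_sup_left (Submodule.smul_mem _ _ (Emap_mem_Tsub t 0 v)))
    (Submodule.mem_sup_right ⟨_, rfl⟩)

lemma gcd_combo (a b c : ℤ) {n : ℕ}
    (S : Submodule ℤ (CC L n)) (v : CC L n)
    (hb : (a+b) • v ∈ S) (hc : (a+c) • v ∈ S) :
    ((Int.gcd (a + b) (a + c) : ℤ)) • v ∈ S := by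
  have h : ((Int.gcd (a + b) (a + c) : ℤ)) • v
      = (a+b).gcdA (a+c) • ((a + b) • v) + (a+b).gcdB (a+c) • ((a + c) • v) := by
    rw [smul_smul, smul_smul, ← add_smul]
    congr 1
    rw [Int.gcd_eq_gcd_ab]
    ring
  rw [h]
  exact Submodule.add_mem _ (Submodule.smul_mem _ _ hb) (Submodule.smul_mem _ _ hc)

end Ann


theorem reduced_homology_annihilated {L : Type*} [DistribLattice L]
    [OrderBot L] [OrderTop L] (a b c d : ℤ) (t : L) :
    ∀ (n : ℕ) (x : Hrel a b c d t n), ((Int.gcd (a + b) (a + c) : ℤ)) • x = 0 := by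
  intro n
  have main : ∀ z : Zrel a b c d t n,
      ((Int.gcd (a + b) (a + c) : ℤ)) • (z : CC L n)
        ∈ Tsub t n ⊔ LinearMap.range (bdLat a b c d n) := by
    intro z
    match n, z with
    | 0, z =>
        exact Ann.gcd_combo a b c _ _
          (Ann.annih_step0 a b c d (a+b) (-(a+b)) t ⊥ (Ann.spec_bot0 a b c d) z)
          (Ann.annih_step0 a b c d (a+c) (-(a+c)) t ⊤ (Ann.spec_top0 a b c d) z)
    | (m+1), z =>
        have hz : bdLat a b c d m (z : CC L (m+1)) ∈ Tsub t m := z.2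
        exact Ann.gcd_combo a b c _ _
          (Ann.annih_step a b c d (a+b) (c+d) t ⊥ m (Ann.spec_bot a b c d m) z hz)
          (Ann.annih_step a b c d (a+c) (b+d) t ⊤ m (Ann.spec_top a b c d m) z hz)
  intro x
  obtain ⟨z, rfl⟩ := Submodule.Quotient.mk_surjective _ x
  rw [← Submodule.Quotient.mk_smul, Submodule.Quotient.mk_eq_zero]
  exact main z
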